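/- arXiv:1207.0233 — 3 statements merged into one kernel-verified Lean document; each statement's English description precedes it below -/
import Mathlib

section
/- Fix t > 0, σ > 0, x, ζ ∈ ℝ and set y = (x - ζ - σ²t/2)/(σ√(2t)). For all integers m ≥ 0 and n ≥ 2, the ratio of Black-Scholes derivatives satisfies ∂_x^m(∂_x^n - ∂_x) u^BS(t,x,σ) / ((∂²_x - ∂_x) u^BS(t,x,σ)) = Σ_{i=2}^{n} (-1/(σ√(2t)))^{m+i-2} H_{m+i-2}(y), where H_k is the k-th Hermite polynomial. -/
open MeasureTheory

/-- Standard normal cumulative distribution function. -/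
noncomputable def stdNormalCDF (y : ℝ) : ℝ :=
  ∫ s in Set.Iic y, Real.exp (-s ^ 2 / 2) / Real.sqrt (2 * Real.pi)

/-- Black-Scholes call price `u^BS(t,x,σ)` with log-strike `ζ`. -/
noncomputable def uBS (ζ t x σ : ℝ) : ℝ :=
  Real.exp x * stdNormalCDF ((x - ζ + σ ^ 2 * t / 2) / (σ * Real.sqrt t)) -
    Real.exp ζ * stdNormalCDF ((x - ζ - σ ^ 2 * t / 2) / (σ * Real.sqrt t))

/-- The `n`-th (physicists') Hermite polynomial via the Rodrigues formula. -/
noncomputable def hermiteH (n : ℕ) (y : ℝ) : ℝ :=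
  (-1) ^ n * Real.exp (y ^ 2) * iteratedDeriv n (fun s => Real.exp (-s ^ 2)) y

namespace RatioAux

open scoped ContDiff

lemma integrable_gaussAux :
    Integrable (fun s : ℝ => Real.exp (-s ^ 2 / 2) / Real.sqrt (2 * Real.pi)) := by
  have key : ∀ s : ℝ, -s ^ 2 / 2 = -(1 / 2 : ℝ) * s ^ 2 := fun s => by ring
  simp only [key]
  exact (integrable_exp_neg_mul_sq (by norm_num)).div_const _

lemma continuous_gaussAux :
    Continuous (fun s : ℝ => Real.exp (-s ^ 2 / 2) / Real.sqrt (2 * Real.pi)) := by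
  apply Continuous.div_const
  exact Real.continuous_exp.comp (by continuity)

lemma hasDerivAt_stdNormalCDF (y : ℝ) :
    HasDerivAt stdNormalCDF (Real.exp (-y ^ 2 / 2) / Real.sqrt (2 * Real.pi)) y := by
  have hint := integrable_gaussAux
  have hcont := continuous_gaussAux
  have key : stdNormalCDF = fun z =>
      (∫ s in Set.Iic (0 : ℝ), Real.exp (-s ^ 2 / 2) / Real.sqrt (2 * Real.pi)) +
        ∫ s in (0 : ℝ)..z, Real.exp (-s ^ 2 / 2) / Real.sqrt (2 * Real.pi) := by
    funext z
    rw [← intervalIntegral.integral_Iic_sub_Iic (μ := volume) hint.integrableOn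
      hint.integrableOn]
    unfold stdNormalCDF
    ring
  rw [key]
  exact HasDerivAt.const_add _
    (intervalIntegral.integral_hasDerivAt_right (hint.intervalIntegrable)
      (hcont.aestronglyMeasurable.stronglyMeasurableAtFilter) hcont.continuousAt)

lemma alg (x ζ c s : ℝ) (hs : s ≠ 0) (hc : c = s ^ 2 / 2) :
    x + -((x - ζ + c) / s) ^ 2 / 2 = ζ + -((x - ζ - c) / s) ^ 2 / 2 := by
  subst hc
  field_simp
  ring

noncomputable def phi0 : ℝ → ℝ := fun s => Real.exp (-s ^ 2)

lemma contDiff_phi0 : ContDiff ℝ ⊤ phi0 :=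
  Real.contDiff_exp.comp ((contDiff_id.pow 2).neg)

noncomputable def bb (t σ : ℝ) : ℝ := (σ * Real.sqrt (2 * t))⁻¹

noncomputable def KK (ζ t σ : ℝ) : ℝ :=
  Real.exp ζ / (σ * Real.sqrt t * Real.sqrt (2 * Real.pi))

noncomputable def cc (ζ t σ : ℝ) : ℝ := -(ζ + σ ^ 2 * t / 2)

noncomputable def gg (ζ t σ : ℝ) : ℝ → ℝ :=
  fun x => KK ζ t σ * phi0 (bb t σ * (x + cc ζ t σ))

noncomputable def uprime (ζ t σ : ℝ) : ℝ → ℝ :=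
  fun x => Real.exp x * stdNormalCDF ((x - ζ + σ ^ 2 * t / 2) / (σ * Real.sqrt t))

section main

variable (ζ t σ : ℝ) (ht : 0 < t) (hσ : 0 < σ)
include ht hσ

lemma hc : σ ^ 2 * t / 2 = (σ * Real.sqrt t) ^ 2 / 2 := by
  rw [mul_pow, Real.sq_sqrt ht.le]

lemma hident (x : ℝ) :
    Real.exp x * (Real.exp (-((x - ζ + σ ^ 2 * t / 2) / (σ * Real.sqrt t)) ^ 2 / 2) /
        Real.sqrt (2 * Real.pi)) =
      Real.exp ζ * (Real.exp (-((x - ζ - σ ^ 2 * t / 2) / (σ * Real.sqrt t)) ^ 2 / 2) /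
        Real.sqrt (2 * Real.pi)) := by
  have hs : σ * Real.sqrt t ≠ 0 := by positivity
  rw [mul_div_assoc'] at *
  rw [mul_div_assoc', ← Real.exp_add, ← Real.exp_add]
  congr 2
  have := RatioAux.alg x ζ (σ ^ 2 * t / 2) (σ * Real.sqrt t) hs (hc t σ ht hσ)
  linarith

lemma hasDerivAt_uBS (x : ℝ) :
    HasDerivAt (fun x' => uBS ζ t x' σ) (uprime ζ t σ x) x := by
  have hs : σ * Real.sqrt t ≠ 0 := by positivity
  have hdp : HasDerivAt (fun x' : ℝ => (x' - ζ + σ ^ 2 * t / 2) / (σ * Real.sqrt t))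
      (1 / (σ * Real.sqrt t)) x := by
    simpa using (((hasDerivAt_id x).sub_const ζ).add_const (σ ^ 2 * t / 2)).div_const
      (σ * Real.sqrt t)
  have hdm : HasDerivAt (fun x' : ℝ => (x' - ζ - σ ^ 2 * t / 2) / (σ * Real.sqrt t))
      (1 / (σ * Real.sqrt t)) x := by
    simpa using (((hasDerivAt_id x).sub_const ζ).sub_const (σ ^ 2 * t / 2)).div_const
      (σ * Real.sqrt t)
  have hNp := (RatioAux.hasDerivAt_stdNormalCDF
    ((x - ζ + σ ^ 2 * t / 2) / (σ * Real.sqrt t))).comp x hdp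
  have hNm := (RatioAux.hasDerivAt_stdNormalCDF
    ((x - ζ - σ ^ 2 * t / 2) / (σ * Real.sqrt t))).comp x hdm
  have h1 := (Real.hasDerivAt_exp x).mul hNp
  have h2 := hNm.const_mul (Real.exp ζ)
  have h3 := h1.sub h2
  have hfun : (fun x' => uBS ζ t x' σ) =
      (fun x' => Real.exp x' *
          (stdNormalCDF ∘ fun x' : ℝ => (x' - ζ + σ ^ 2 * t / 2) / (σ * Real.sqrt t)) x' -
        Real.exp ζ *
          (stdNormalCDF ∘ fun x' : ℝ => (x' - ζ - σ ^ 2 * t / 2) / (σ * Real.sqrt t)) x') := rfl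
  rw [hfun]
  refine h3.congr_deriv ?_
  have := hident ζ t σ ht hσ x
  simp only [Function.comp, uprime]
  linear_combination (1 / (σ * Real.sqrt t)) * this

lemma deriv_uBS : deriv (fun x' => uBS ζ t x' σ) = uprime ζ t σ :=
  funext fun x => (hasDerivAt_uBS ζ t σ ht hσ x).deriv

lemma gg_eq (x : ℝ) :
    Real.exp ζ * (Real.exp (-((x - ζ - σ ^ 2 * t / 2) / (σ * Real.sqrt t)) ^ 2 / 2) /
        Real.sqrt (2 * Real.pi)) * (1 / (σ * Real.sqrt t)) = gg ζ t σ x := by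
  have hst : Real.sqrt t ≠ 0 := by positivity
  have h2t : Real.sqrt (2 * t) ^ 2 = 2 * t := Real.sq_sqrt (by linarith)
  have hts : Real.sqrt t ^ 2 = t := Real.sq_sqrt ht.le
  have h2st : Real.sqrt (2 * t) ≠ 0 := by positivity
  have hexp : -((x - ζ - σ ^ 2 * t / 2) / (σ * Real.sqrt t)) ^ 2 / 2 =
      -(bb t σ * (x + cc ζ t σ)) ^ 2 := by
    have hs2 : Real.sqrt 2 ^ 2 = 2 := Real.sq_sqrt (by norm_num)
    unfold bb cc
    field_simp
    rw [Real.sq_sqrt (by positivity), hts]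
    ring
  rw [hexp]
  unfold gg KK phi0
  field_simp

lemma hasDerivAt_uprime (x : ℝ) :
    HasDerivAt (uprime ζ t σ) (uprime ζ t σ x + gg ζ t σ x) x := by
  have hdp : HasDerivAt (fun x' : ℝ => (x' - ζ + σ ^ 2 * t / 2) / (σ * Real.sqrt t))
      (1 / (σ * Real.sqrt t)) x := by
    simpa using (((hasDerivAt_id x).sub_const ζ).add_const (σ ^ 2 * t / 2)).div_const
      (σ * Real.sqrt t)
  have hNp := (RatioAux.hasDerivAt_stdNormalCDF
    ((x - ζ + σ ^ 2 * t / 2) / (σ * Real.sqrt t))).comp x hdp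
  have h1 := (Real.hasDerivAt_exp x).mul hNp
  refine h1.congr_deriv ?_
  have hid := hident ζ t σ ht hσ x
  have hgg := gg_eq ζ t σ ht hσ x
  simp only [Function.comp, uprime]
  linear_combination hgg + (1 / (σ * Real.sqrt t)) * hid

omit ht hσ in
lemma iD_comp (f : ℝ → ℝ) (m j : ℕ) :
    iteratedDeriv m (iteratedDeriv j f) = iteratedDeriv (m + j) f := by
  induction m with
  | zero => simp
  | succ m ih =>
    rw [iteratedDeriv_succ, ih, show m + 1 + j = (m + j) + 1 by omega, iteratedDeriv_succ]

omit ht hσ in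
lemma iD_add {f g : ℝ → ℝ} (hf : ContDiff ℝ ∞ f) (hg : ContDiff ℝ ∞ g) (m : ℕ) (x : ℝ) :
    iteratedDeriv m (fun y => f y + g y) x = iteratedDeriv m f x + iteratedDeriv m g x := by
  rw [← iteratedDerivWithin_univ, ← iteratedDerivWithin_univ, ← iteratedDerivWithin_univ]
  have hf' : ContDiffOn ℝ m f Set.univ := (hf.of_le (by exact_mod_cast le_top)).contDiffOn
  have hg' : ContDiffOn ℝ m g Set.univ := (hg.of_le (by exact_mod_cast le_top)).contDiffOn
  have := iteratedDerivWithin_add (Set.mem_univ x) uniqueDiffOn_univ (hf'.contDiffWithinAt (Set.mem_univ x)) (hg'.contDiffWithinAt (Set.mem_univ x))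
  simpa [Pi.add_def] using this

omit ht hσ in
lemma iD_sum (m N : ℕ) (f : ℕ → ℝ → ℝ) (hf : ∀ j, ContDiff ℝ ∞ (f j)) (x : ℝ) :
    iteratedDeriv m (fun y => ∑ j ∈ Finset.range N, f j y) x =
      ∑ j ∈ Finset.range N, iteratedDeriv m (f j) x := by
  induction N with
  | zero =>
    simp only [Finset.range_zero, Finset.sum_empty]
    rw [iteratedDeriv_eq_iterate, Function.iterate_fixed (deriv_const' (0 : ℝ))]
  | succ N ih =>
    have hS : ContDiff ℝ ∞ (fun y => ∑ j ∈ Finset.range N, f j y) :=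
      ContDiff.sum fun i _ => hf i
    simp only [Finset.sum_range_succ]
    rw [iD_add hS (hf N) m x, ih]

omit ht hσ in
lemma scale (F : ℝ → ℝ) (hF : ContDiff ℝ ⊤ F) (Kc b d : ℝ) (k : ℕ) :
    iteratedDeriv k (fun x => Kc * F (b * (x + d))) =
      fun x => Kc * b ^ k * iteratedDeriv k F (b * (x + d)) := by
  have h1 : iteratedDeriv k (fun z : ℝ => F (b * z)) =
      fun z => b ^ k * iteratedDeriv k F (b * z) :=
    iteratedDeriv_comp_const_mul (hF.of_le le_top) b
  have h2 : iteratedDeriv k (fun z : ℝ => F (b * (z + d))) =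
      fun z => iteratedDeriv k (fun z : ℝ => F (b * z)) (z + d) :=
    iteratedDeriv_comp_add_const k (fun z : ℝ => F (b * z)) d
  have hsm : ContDiffOn ℝ k (fun z : ℝ => F (b * (z + d))) Set.univ :=
    (((hF.of_le le_top).comp
      (contDiff_const.mul (contDiff_id.add contDiff_const)) : ContDiff ℝ k _)).contDiffOn
  funext x
  have h3 : iteratedDeriv k (fun z => Kc * F (b * (z + d))) x =
      Kc * iteratedDeriv k (fun z : ℝ => F (b * (z + d))) x := by
    rw [← iteratedDerivWithin_univ, ← iteratedDerivWithin_univ]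
    exact iteratedDerivWithin_const_mul (Set.mem_univ x) uniqueDiffOn_univ Kc (hsm.contDiffWithinAt (Set.mem_univ x))
  rw [h3, congrFun h2 x, congrFun h1 (x + d)]
  ring

omit ht hσ in
lemma contDiff_gg : ContDiff ℝ ⊤ (gg ζ t σ) := by
  unfold gg
  have h1 : ContDiff ℝ ⊤ (fun z : ℝ => bb t σ * (z + cc ζ t σ)) := by fun_prop
  exact contDiff_const.mul (contDiff_phi0.comp h1)

omit ht hσ in
lemma contDiff_iD_gg (j : ℕ) : ContDiff ℝ ∞ (iteratedDeriv j (gg ζ t σ)) := by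
  rw [iteratedDeriv_eq_iterate]
  exact ContDiff.iterate_deriv j ((contDiff_gg ζ t σ).of_le le_top)

lemma key : ∀ k : ℕ, iteratedDeriv (k + 2) (fun x' => uBS ζ t x' σ) =
    fun x => uprime ζ t σ x + ∑ j ∈ Finset.range (k + 1), iteratedDeriv j (gg ζ t σ) x := by
  intro k
  induction k with
  | zero =>
    have h2 : iteratedDeriv 2 (fun x' => uBS ζ t x' σ) =
        deriv (deriv (fun x' => uBS ζ t x' σ)) := by
      rw [show (2 : ℕ) = 1 + 1 from rfl, iteratedDeriv_succ, iteratedDeriv_one]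
    rw [h2, deriv_uBS ζ t σ ht hσ]
    funext x
    rw [(hasDerivAt_uprime ζ t σ ht hσ x).deriv]
    simp
  | succ k ih =>
    rw [show k + 1 + 2 = (k + 2) + 1 by omega, iteratedDeriv_succ, ih]
    funext x
    have hder : HasDerivAt
        (fun y => uprime ζ t σ y + ∑ j ∈ Finset.range (k + 1), iteratedDeriv j (gg ζ t σ) y)
        ((uprime ζ t σ x + gg ζ t σ x) +
          ∑ j ∈ Finset.range (k + 1), iteratedDeriv (j + 1) (gg ζ t σ) x) x := by
      apply (hasDerivAt_uprime ζ t σ ht hσ x).add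
      apply HasDerivAt.fun_sum
      intro j _
      have hcd := contDiff_iD_gg ζ t σ j
      have hdiff : DifferentiableAt ℝ (iteratedDeriv j (gg ζ t σ)) x :=
        (hcd.differentiable (by simp)).differentiableAt
      rw [iteratedDeriv_succ]
      exact hdiff.hasDerivAt
    rw [hder.deriv]
    conv_rhs => rw [Finset.sum_range_succ']
    rw [show iteratedDeriv 0 (gg ζ t σ) = gg ζ t σ from iteratedDeriv_zero]
    ring

end main

end RatioAux

theorem ratio_lemma_hermite (ζ t x σ : ℝ) (ht : 0 < t) (hσ : 0 < σ)
    (m n : ℕ) (hn : 2 ≤ n) :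
    iteratedDeriv m
        (fun x' => iteratedDeriv n (fun x'' => uBS ζ t x'' σ) x' -
          deriv (fun x'' => uBS ζ t x'' σ) x') x /
      (iteratedDeriv 2 (fun x' => uBS ζ t x' σ) x - deriv (fun x' => uBS ζ t x' σ) x) =
      ∑ i ∈ Finset.Icc 2 n,
        (-(1 / (σ * Real.sqrt (2 * t)))) ^ (m + i - 2) *
          hermiteH (m + i - 2) ((x - ζ - σ ^ 2 * t / 2) / (σ * Real.sqrt (2 * t))) := by
  classical
  obtain ⟨k, rfl⟩ : ∃ k, n = k + 2 := ⟨n - 2, by omega⟩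
  have hclosed : ∀ p : ℕ, iteratedDeriv p (RatioAux.gg ζ t σ) =
      fun x => RatioAux.KK ζ t σ * RatioAux.bb t σ ^ p *
        iteratedDeriv p RatioAux.phi0 (RatioAux.bb t σ * (x + RatioAux.cc ζ t σ)) :=
    fun p => RatioAux.scale RatioAux.phi0 RatioAux.contDiff_phi0 _ _ _ p
  have hnum : (fun x' => iteratedDeriv (k + 2) (fun x'' => uBS ζ t x'' σ) x' -
      deriv (fun x'' => uBS ζ t x'' σ) x') =
      fun x' => ∑ j ∈ Finset.range (k + 1), iteratedDeriv j (RatioAux.gg ζ t σ) x' := by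
    funext x'
    rw [congrFun (RatioAux.key ζ t σ ht hσ k) x',
      congrFun (RatioAux.deriv_uBS ζ t σ ht hσ) x']
    ring
  have hden : iteratedDeriv 2 (fun x' => uBS ζ t x' σ) x -
      deriv (fun x' => uBS ζ t x' σ) x = RatioAux.gg ζ t σ x := by
    have h1 := congrFun (RatioAux.key ζ t σ ht hσ 0) x
    rw [show (0 : ℕ) + 2 = 2 from rfl] at h1
    rw [h1, congrFun (RatioAux.deriv_uBS ζ t σ ht hσ) x]
    simp
  rw [hnum, hden,
    RatioAux.iD_sum m (k + 1) (fun j => iteratedDeriv j (RatioAux.gg ζ t σ))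
      (fun j => RatioAux.contDiff_iD_gg ζ t σ j) x]
  simp only [RatioAux.iD_comp]
  simp only [hclosed]
  have hY : RatioAux.bb t σ * (x + RatioAux.cc ζ t σ) =
      (x - ζ - σ ^ 2 * t / 2) / (σ * Real.sqrt (2 * t)) := by
    unfold RatioAux.bb RatioAux.cc
    have : σ * Real.sqrt (2 * t) ≠ 0 := by positivity
    field_simp
    ring
  rw [← Finset.Ico_add_one_right_eq_Icc, Finset.sum_Ico_eq_sum_range,
    show k + 2 + 1 - 2 = k + 1 by omega, Finset.sum_div]
  refine Finset.sum_congr rfl fun j hj => ?_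
  rw [show m + (2 + j) - 2 = m + j by omega, ← hY]
  unfold hermiteH RatioAux.gg RatioAux.phi0
  set Y := RatioAux.bb t σ * (x + RatioAux.cc ζ t σ) with hYdef
  have hbb : RatioAux.bb t σ = 1 / (σ * Real.sqrt (2 * t)) := by
    unfold RatioAux.bb; rw [one_div]
  have hKK : RatioAux.KK ζ t σ ≠ 0 := by
    unfold RatioAux.KK
    have h1 : (0:ℝ) < Real.sqrt t := Real.sqrt_pos.mpr ht
    have h2 : (0:ℝ) < Real.sqrt (2 * Real.pi) := Real.sqrt_pos.mpr (by positivity)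
    positivity
  have hinv : Real.exp (Y ^ 2) = (Real.exp (-Y ^ 2))⁻¹ := by
    rw [← Real.exp_neg]; ring_nf
  rw [hbb, hinv]
  have hE : Real.exp (-Y ^ 2) ≠ 0 := Real.exp_ne_zero _
  field_simp
  have hs1 : ((-1 : ℝ) ^ m * (-1 : ℝ) ^ j) ^ 2 = 1 := by
    rw [← pow_add, ← pow_mul]
    exact Even.neg_one_pow ⟨m + j, by ring⟩
  rw [neg_pow]
  linear_combination (-(iteratedDeriv (m + j) (fun s => Real.exp (-s ^ 2)) Y *
    (1 / (σ * Real.sqrt (2 * t))) ^ (m + j))) * hs1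
end

section
/- Define coefficients c_{n, n-2q} for integers n ≥ 1 and 0 ≤ q ≤ ⌊n/2⌋ recursively by c_{n,n} = 1 and c_{n, n-2q} = (n - 2q + 1) c_{n-1, n-2q+1} + c_{n-1, n-2q-1}. Let L = t(∂²_x - ∂_x) and note ∂_σ u^BS = σ L u^BS for the Black-Scholes price. Then for every n ≥ 1: ∂_σ^n u^BS(t,x,σ) = Σ_{q=0}^{⌊n/2⌋} c_{n, n-2q} σ^{n-2q} L^{n-q} u^BS(t,x,σ). -/
open MeasureTheory

/-- The coefficients `c_{n, n-2q}` (here `ccoef n q := c_{n, n-2q}`), defined by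
`c_{n,n} = 1` and `c_{n, n-2q} = (n - 2q + 1) c_{n-1, n-2q+1} + c_{n-1, n-2q-1}`,
with the convention that out-of-range coefficients vanish. -/
noncomputable def ccoef : ℕ → ℕ → ℝ
  | _, 0 => 1
  | 0, _ + 1 => 0
  | n + 1, q + 1 =>
      if q + 1 ≤ (n + 1) / 2 then
        ((n : ℝ) + 1 - 2 * (q + 1) + 1) * ccoef n q + ccoef n (q + 1)
      else 0

/-- The operator `L = t(∂²_x - ∂_x)` acting on functions of `x`. -/
noncomputable def Lop (t : ℝ) (f : ℝ → ℝ) : ℝ → ℝ :=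
  fun x => t * (iteratedDeriv 2 f x - deriv f x)

namespace BSAux
open MvPolynomial Real

noncomputable def gaussD (y : ℝ) : ℝ := Real.exp (-y ^ 2 / 2) / Real.sqrt (2 * Real.pi)

lemma integrable_gaussD : Integrable gaussD := by
  have h : Integrable (fun y : ℝ => Real.exp (-(1/2) * y ^ 2)) := integrable_exp_neg_mul_sq (by norm_num)
  have := h.div_const (Real.sqrt (2 * Real.pi))
  refine this.congr (Filter.Eventually.of_forall fun y => ?_)
  unfold gaussD
  ring_nf

lemma continuous_gaussD : Continuous gaussD := by
  unfold gaussD; fun_prop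

lemma hasDerivAt_stdNormalCDF (y : ℝ) : HasDerivAt stdNormalCDF (gaussD y) y := by
  have heq : stdNormalCDF = fun y => stdNormalCDF 0 + ∫ s in (0:ℝ)..y, gaussD s := by
    funext z
    rw [eq_comm, add_comm]
    rw [← intervalIntegral.integral_Iic_sub_Iic integrable_gaussD.integrableOn integrable_gaussD.integrableOn]
    unfold stdNormalCDF gaussD
    ring
  rw [heq]
  exact (intervalIntegral.integral_hasDerivAt_right
    integrable_gaussD.intervalIntegrable
    (continuous_gaussD.stronglyMeasurableAtFilter _ _)
    continuous_gaussD.continuousAt).const_add _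
abbrev MP := MvPolynomial (Fin 2) ℝ

noncomputable def Aop (Q : MP) : MP := C (2⁻¹ : ℝ) * Q - X 0 * X 1 * Q + X 1 * pderiv 0 Q
noncomputable def Rop (Q : MP) : MP :=
  pderiv 0 (pderiv 0 Q) - X 0 * pderiv 0 Q + X 1 * pderiv 1 Q
noncomputable def Tmap (t : ℝ) (Q : MP) : MP := C t * (Aop (Aop Q) - Aop Q)
noncomputable def Pk (t : ℝ) (k : ℕ) : MP := (Tmap t)^[k] 1

lemma pderiv_comm01 (Q : MP) : pderiv 0 (pderiv 1 Q) = pderiv 1 (pderiv 0 Q) := by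
  induction Q using MvPolynomial.induction_on with
  | C a => simp
  | add p q hp hq => simp [hp, hq]
  | mul_X p i hp =>
    fin_cases i <;>
      simp [pderiv_mul, hp, pderiv_X_self, pderiv_X_of_ne (by decide : (0:Fin 2) ≠ 1),
        pderiv_X_of_ne (by decide : (1:Fin 2) ≠ 0)] <;> ring

lemma Rop_Aop (Q : MP) : Rop (Aop Q) = Aop (Rop Q) := by
  unfold Rop Aop
  simp only [map_add, map_sub, pderiv_mul, pderiv_X_self, pderiv_one, map_zero, map_one,
    pderiv_X_of_ne (by decide : (0:Fin 2) ≠ 1), pderiv_X_of_ne (by decide : (1:Fin 2) ≠ 0),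
    pderiv_C, pderiv_comm01, zero_mul, mul_zero, add_zero, zero_add, mul_one, one_mul]
  ring

lemma Rop_Pk (t : ℝ) (k : ℕ) : Rop (Pk t k) = 0 := by
  have hA0 : Aop 0 = 0 := by unfold Aop; simp
  induction k with
  | zero => unfold Pk; simp [Rop]
  | succ k ih =>
    have h : Pk t (k+1) = Tmap t (Pk t k) := Function.iterate_succ_apply' _ _ _
    rw [h]
    unfold Tmap
    have hRC : ∀ (c : ℝ) (Q : MP), Rop (C c * Q) = C c * Rop Q := by
      intro c Q; unfold Rop; simp [pderiv_C_mul]; ring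
    have hRsub : ∀ (Q₁ Q₂ : MP), Rop (Q₁ - Q₂) = Rop Q₁ - Rop Q₂ := by
      intro Q₁ Q₂; unfold Rop; simp only [map_sub]; ring
    rw [hRC, hRsub, Rop_Aop, Rop_Aop, ih, hA0, hA0]
    simp

lemma Aop_X1 (Q : MP) : Aop (X 1 * Q) = X 1 * Aop Q := by
  unfold Aop
  simp [pderiv_mul, pderiv_X_of_ne (by decide : (1:Fin 2) ≠ 0)]
  ring

lemma AAP (P : MP) (h : Rop P = 0) :
    Aop (Aop P) - Aop P =
      X 1 ^ 2 * ((X 0 ^ 2 - 1) * P - X 0 * pderiv 0 P - X 1 * pderiv 1 P) - C (4⁻¹ : ℝ) * P := by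
  have h' : pderiv 0 (pderiv 0 P) = X 0 * pderiv 0 P - X 1 * pderiv 1 P := by
    unfold Rop at h; linear_combination h
  have h1 : ((2 : MP) * C (2⁻¹ : ℝ)) = 1 := by
    rw [show ((2:MP)) = C (2:ℝ) by rw [map_ofNat], ← map_mul]; norm_num
  have h2 : (C (2⁻¹ : ℝ) : MP) * C (2⁻¹ : ℝ) = C (4⁻¹ : ℝ) := by
    rw [← map_mul]; norm_num
  have h3 : ((2 : MP) * C (4⁻¹ : ℝ)) = C (2⁻¹ : ℝ) := by
    rw [show ((2:MP)) = C (2:ℝ) by rw [map_ofNat], ← map_mul]; norm_num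
  unfold Aop
  simp only [map_add, map_sub, pderiv_mul, pderiv_X_self, pderiv_one, map_zero, map_one,
    pderiv_X_of_ne (by decide : (0:Fin 2) ≠ 1), pderiv_X_of_ne (by decide : (1:Fin 2) ≠ 0),
    pderiv_C, h', zero_mul, mul_zero, add_zero, zero_add, mul_one, one_mul]
  linear_combination (X 1 * pderiv 0 P - P * X 0 * X 1) * h1 + P * h2 + P * h3
lemma hasDerivAt_eval2 (Q : MP) {g h : ℝ → ℝ} {s g' h' : ℝ}
    (hg : HasDerivAt g g' s) (hh : HasDerivAt h h' s) :
    HasDerivAt (fun u => eval ![g u, h u] Q)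
      (eval ![g s, h s] (pderiv 0 Q) * g' + eval ![g s, h s] (pderiv 1 Q) * h') s := by
  induction Q using MvPolynomial.induction_on with
  | C a => simpa using hasDerivAt_const s (a : ℝ)
  | add p q hp hq =>
    have := hp.fun_add hq
    simp only [map_add, eval_add] at this ⊢
    refine this.congr_deriv ?_
    ring
  | mul_X p i hp =>
    fin_cases i
    · have := hp.mul hg
      refine HasDerivAt.congr_deriv (this.congr_of_eventuallyEq ?_) ?_
      · filter_upwards with u; simp
      · simp [pderiv_mul, pderiv_X_self, pderiv_X_of_ne (by decide : (0:Fin 2) ≠ 1)]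
        ring
    · have := hp.mul hh
      refine HasDerivAt.congr_deriv (this.congr_of_eventuallyEq ?_) ?_
      · filter_upwards with u; simp
      · simp [pderiv_mul, pderiv_X_self, pderiv_X_of_ne (by decide : (1:Fin 2) ≠ 0)]
        ring
noncomputable def yv (ζ t x σ : ℝ) : ℝ := (x - ζ) / (σ * Real.sqrt t)
noncomputable def bv (t σ : ℝ) : ℝ := 1 / (σ * Real.sqrt t)
noncomputable def Ev (ζ t x σ : ℝ) : ℝ := x / 2 - σ ^ 2 * t / 8 - yv ζ t x σ ^ 2 / 2
noncomputable def dpv (ζ t x σ : ℝ) : ℝ := yv ζ t x σ + σ * Real.sqrt t / 2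
noncomputable def dmv (ζ t x σ : ℝ) : ℝ := yv ζ t x σ - σ * Real.sqrt t / 2
noncomputable def FF (ζ t σ : ℝ) (Q : MP) : ℝ → ℝ := fun x =>
  t * Real.exp (ζ / 2) / Real.sqrt (2 * Real.pi) * Real.exp (Ev ζ t x σ) *
    eval ![yv ζ t x σ, bv t σ] Q

lemma uBS_eq {ζ t x σ : ℝ} (ht : 0 < t) (hσ : 0 < σ) : uBS ζ t x σ =
    Real.exp x * stdNormalCDF (dpv ζ t x σ) - Real.exp ζ * stdNormalCDF (dmv ζ t x σ) := by
  have h2 : Real.sqrt t * Real.sqrt t = t := Real.mul_self_sqrt ht.le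
  have hs : (0:ℝ) < Real.sqrt t := Real.sqrt_pos.2 ht
  have e1 : (x - ζ + σ ^ 2 * t / 2) / (σ * Real.sqrt t) = dpv ζ t x σ := by
    unfold dpv yv; field_simp; linear_combination (-σ^2) * h2
  have e2 : (x - ζ - σ ^ 2 * t / 2) / (σ * Real.sqrt t) = dmv ζ t x σ := by
    unfold dmv yv; field_simp; linear_combination (σ^2) * h2
  unfold uBS; rw [e1, e2]

lemma keyId {ζ t x σ : ℝ} (ht : 0 < t) (hσ : 0 < σ) :
    Real.exp ζ * gaussD (dmv ζ t x σ) = Real.exp x * gaussD (dpv ζ t x σ) := by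
  have h2 : Real.sqrt t * Real.sqrt t = t := Real.mul_self_sqrt ht.le
  have hs : (0:ℝ) < Real.sqrt t := Real.sqrt_pos.2 ht
  unfold gaussD
  rw [mul_div_assoc', mul_div_assoc', ← Real.exp_add, ← Real.exp_add]
  congr 1
  unfold dpv dmv yv
  field_simp
  ring_nf

lemma expId {ζ t x σ : ℝ} (ht : 0 < t) (hσ : 0 < σ) :
    Real.exp (ζ / 2) * Real.exp (Ev ζ t x σ) =
    Real.exp x * Real.exp (-(dpv ζ t x σ) ^ 2 / 2) := by
  have h2 : Real.sqrt t * Real.sqrt t = t := Real.mul_self_sqrt ht.le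
  have hs : (0:ℝ) < Real.sqrt t := Real.sqrt_pos.2 ht
  rw [← Real.exp_add, ← Real.exp_add]
  congr 1
  unfold Ev dpv yv
  field_simp
  linear_combination (8*σ^4*Real.sqrt t^2) * h2
lemma iteratedDeriv_two (f : ℝ → ℝ) : iteratedDeriv 2 f = deriv (deriv f) := by
  have h : iteratedDeriv (1 + 1) f = deriv (iteratedDeriv 1 f) := iteratedDeriv_succ
  simpa [iteratedDeriv_one] using h

lemma hyv_x {ζ t σ : ℝ} (x : ℝ) : HasDerivAt (fun x' => yv ζ t x' σ) (bv t σ) x := by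
  have h := ((hasDerivAt_id x).sub_const ζ).div_const (σ * Real.sqrt t)
  simpa [yv, bv] using h

lemma hdpv_x {ζ t σ : ℝ} (x : ℝ) : HasDerivAt (fun x' => dpv ζ t x' σ) (bv t σ) x :=
  (hyv_x x).add_const _

lemma hdmv_x {ζ t σ : ℝ} (x : ℝ) : HasDerivAt (fun x' => dmv ζ t x' σ) (bv t σ) x :=
  (hyv_x x).sub_const _

lemma hasDerivAt_uBS_x {ζ t x σ : ℝ} (ht : 0 < t) (hσ : 0 < σ) :
    HasDerivAt (fun x' => uBS ζ t x' σ) (Real.exp x * stdNormalCDF (dpv ζ t x σ)) x := by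
  have hfun : (fun x' => uBS ζ t x' σ) = fun x' =>
      Real.exp x' * stdNormalCDF (dpv ζ t x' σ) - Real.exp ζ * stdNormalCDF (dmv ζ t x' σ) := by
    funext x'; exact uBS_eq ht hσ
  rw [hfun]
  have hp : HasDerivAt (fun x' => stdNormalCDF (dpv ζ t x' σ))
      (gaussD (dpv ζ t x σ) * bv t σ) x :=
    (hasDerivAt_stdNormalCDF _).comp x (hdpv_x x)
  have hm : HasDerivAt (fun x' => stdNormalCDF (dmv ζ t x' σ))
      (gaussD (dmv ζ t x σ) * bv t σ) x :=
    (hasDerivAt_stdNormalCDF _).comp x (hdmv_x x)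
  have h := ((Real.hasDerivAt_exp x).mul hp).sub (hm.const_mul (Real.exp ζ))
  refine h.congr_deriv ?_
  have k := keyId (ζ := ζ) (x := x) (σ := σ) ht hσ
  linear_combination (-(bv t σ)) * k

lemma deriv_uBS_x {ζ t σ : ℝ} (ht : 0 < t) (hσ : 0 < σ) :
    deriv (fun x' => uBS ζ t x' σ) = fun x' => Real.exp x' * stdNormalCDF (dpv ζ t x' σ) :=
  funext fun _ => (hasDerivAt_uBS_x ht hσ).deriv

lemma hLuBS {ζ t σ : ℝ} (ht : 0 < t) (hσ : 0 < σ) :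
    Lop t (fun x' => uBS ζ t x' σ) = FF ζ t σ (X 1) := by
  funext x
  unfold Lop
  rw [iteratedDeriv_two, deriv_uBS_x ht hσ]
  have hD : HasDerivAt (fun x' => Real.exp x' * stdNormalCDF (dpv ζ t x' σ))
      (Real.exp x * stdNormalCDF (dpv ζ t x σ) +
        Real.exp x * (gaussD (dpv ζ t x σ) * bv t σ)) x :=
    (Real.hasDerivAt_exp x).mul ((hasDerivAt_stdNormalCDF _).comp x (hdpv_x x))
  rw [hD.deriv]
  unfold FF
  simp only [eval_X, Matrix.cons_val_one, Matrix.head_cons, Matrix.cons_val_zero]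
  have e := expId (ζ := ζ) (t := t) (x := x) (σ := σ) ht hσ
  unfold gaussD
  have hpi : Real.sqrt (2 * Real.pi) ≠ 0 := by
    positivity
  field_simp
  rw [neg_div] at e
  linear_combination (-(bv t σ)) * e

lemma hEv_x {ζ t σ : ℝ} (x : ℝ) :
    HasDerivAt (fun x' => Ev ζ t x' σ) (2⁻¹ - yv ζ t x σ * bv t σ) x := by
  have h1 := ((hasDerivAt_id x).div_const 2).sub_const (σ ^ 2 * t / 8)
  have h2 := ((hyv_x (ζ := ζ) (t := t) (σ := σ) x).pow 2).div_const 2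
  have h := h1.sub h2
  refine (h.congr_deriv ?_)
  push_cast
  ring

lemma hFF_x {ζ t σ : ℝ} (Q : MP) (x : ℝ) :
    HasDerivAt (FF ζ t σ Q) (FF ζ t σ (Aop Q) x) x := by
  have hev := hasDerivAt_eval2 Q (hyv_x (ζ := ζ) (t := t) (σ := σ) x)
    (hasDerivAt_const x (bv t σ))
  have h := (((hEv_x (ζ := ζ) (t := t) (σ := σ) x).exp).const_mul
    (t * Real.exp (ζ / 2) / Real.sqrt (2 * Real.pi))).mul hev
  refine h.congr_deriv ?_
  unfold FF Aop
  simp only [map_add, map_sub, map_mul, eval_X, eval_C, Matrix.cons_val_zero,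
    Matrix.cons_val_one, Matrix.head_cons]
  ring

lemma hLF {ζ t σ : ℝ} (Q : MP) :
    Lop t (FF ζ t σ Q) = FF ζ t σ (Tmap t Q) := by
  funext x
  unfold Lop
  have hd : deriv (FF ζ t σ Q) = FF ζ t σ (Aop Q) := funext fun x' => (hFF_x Q x').deriv
  have hd2 : deriv (FF ζ t σ (Aop Q)) = FF ζ t σ (Aop (Aop Q)) :=
    funext fun x' => (hFF_x (Aop Q) x').deriv
  rw [iteratedDeriv_two, hd, hd2]
  unfold FF Tmap
  simp only [map_sub, map_mul, eval_C]
  ring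

lemma Tmap_X1 (tv : ℝ) (Q : MP) : Tmap tv (X 1 * Q) = X 1 * Tmap tv Q := by
  unfold Tmap; rw [Aop_X1, Aop_X1]; ring

lemma hLk {ζ t σ : ℝ} (ht : 0 < t) (hσ : 0 < σ) (k : ℕ) :
    (Lop t)^[k + 1] (fun x' => uBS ζ t x' σ) = FF ζ t σ (X 1 * Pk t k) := by
  induction k with
  | zero =>
    rw [Function.iterate_one, hLuBS ht hσ]
    simp [Pk]
  | succ k ih =>
    rw [Function.iterate_succ_apply', ih, hLF]
    rw [show Pk t (k + 1) = Tmap t (Pk t k) from Function.iterate_succ_apply' _ _ _, Tmap_X1]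
lemma hyv_s {ζ t x σ : ℝ} (hσ : 0 < σ) :
    HasDerivAt (fun s => yv ζ t x s) (-(yv ζ t x σ) / σ) σ := by
  have h := (hasDerivAt_inv hσ.ne').const_mul ((x - ζ) / Real.sqrt t)
  have hfun : (fun s => (x - ζ) / Real.sqrt t * s⁻¹) = fun s => yv ζ t x s := by
    funext s; unfold yv
    ring
  rw [hfun] at h
  refine h.congr_deriv ?_
  unfold yv
  field_simp

lemma hbv_s {t σ : ℝ} (hσ : 0 < σ) :
    HasDerivAt (fun s => bv t s) (-(bv t σ) / σ) σ := by
  have h := (hasDerivAt_inv hσ.ne').const_mul ((1:ℝ) / Real.sqrt t)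
  have hfun : (fun s => (1:ℝ) / Real.sqrt t * s⁻¹) = fun s => bv t s := by
    funext s; unfold bv
    ring
  rw [hfun] at h
  refine h.congr_deriv ?_
  unfold bv
  field_simp

lemma hEv_s {ζ t x σ : ℝ} (hσ : 0 < σ) :
    HasDerivAt (fun s => Ev ζ t x s) (-(σ * t) / 4 + yv ζ t x σ ^ 2 / σ) σ := by
  have h1 : HasDerivAt (fun s : ℝ => s ^ 2 * t / 8) (2 * σ * t / 8) σ := by
    have := ((hasDerivAt_pow 2 σ).mul_const t).div_const 8
    refine this.congr_deriv ?_; push_cast; ring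
  have h2 := ((hyv_s (ζ := ζ) (t := t) (x := x) hσ).pow 2).div_const 2
  have h := ((hasDerivAt_const σ (x / 2)).sub h1).sub h2
  refine h.congr_deriv ?_
  push_cast
  field_simp
  ring

lemma hFF_s {ζ t x σ : ℝ} (hσ : 0 < σ) (Q : MP) :
    HasDerivAt (fun s => FF ζ t s Q x)
      (t * Real.exp (ζ / 2) / Real.sqrt (2 * Real.pi) * Real.exp (Ev ζ t x σ) *
        ((-(σ * t) / 4 + yv ζ t x σ ^ 2 / σ) * eval ![yv ζ t x σ, bv t σ] Q +
          eval ![yv ζ t x σ, bv t σ] (pderiv 0 Q) * (-(yv ζ t x σ) / σ) +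
          eval ![yv ζ t x σ, bv t σ] (pderiv 1 Q) * (-(bv t σ) / σ))) σ := by
  have hev := hasDerivAt_eval2 Q (hyv_s (ζ := ζ) (t := t) (x := x) hσ) (hbv_s (t := t) hσ)
  have h := (((hEv_s (ζ := ζ) (t := t) (x := x) hσ).exp).const_mul
    (t * Real.exp (ζ / 2) / Real.sqrt (2 * Real.pi))).mul hev
  refine h.congr_deriv ?_
  ring

lemma hMain {ζ t x σ : ℝ} (ht : 0 < t) (hσ : 0 < σ) (P : MP) (hP : Rop P = 0) :
    HasDerivAt (fun s => FF ζ t s (X 1 * P) x)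
      (σ * FF ζ t σ (X 1 * Tmap t P) x) σ := by
  have h := hFF_s (ζ := ζ) (t := t) (x := x) hσ (X 1 * P)
  refine h.congr_deriv ?_
  have h2 : Real.sqrt t * Real.sqrt t = t := Real.mul_self_sqrt ht.le
  have hs : (0:ℝ) < Real.sqrt t := Real.sqrt_pos.2 ht
  unfold FF Tmap
  rw [AAP P hP]
  simp only [map_add, map_sub, map_mul, map_pow, eval_X, eval_C, map_one,
    Matrix.cons_val_zero, Matrix.cons_val_one, Matrix.head_cons,
    pderiv_mul, pderiv_X_self, pderiv_X_of_ne (by decide : (0:Fin 2) ≠ 1),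
    pderiv_X_of_ne (by decide : (1:Fin 2) ≠ 0), pderiv_C]
  have hb : bv t σ = 1 / (σ * Real.sqrt t) := rfl
  have hk' : σ * t * bv t σ ^ 2 = σ⁻¹ := by
    rw [hb, one_div, inv_pow, mul_pow, Real.sq_sqrt ht.le]
    field_simp
  simp only [map_zero]
  linear_combination (-(t * Real.exp (ζ / 2) / Real.sqrt (2 * Real.pi) * Real.exp (Ev ζ t x σ) *
    bv t σ * ((yv ζ t x σ ^ 2 - 1) * eval ![yv ζ t x σ, bv t σ] P -
      yv ζ t x σ * eval ![yv ζ t x σ, bv t σ] (pderiv 0 P) -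
      bv t σ * eval ![yv ζ t x σ, bv t σ] (pderiv 1 P)))) * hk'
lemma hM0 {ζ t x σ : ℝ} (ht : 0 < t) (hσ : 0 < σ) :
    HasDerivAt (fun s => uBS ζ t x s) (σ * FF ζ t σ (X 1) x) σ := by
  have h2 : Real.sqrt t * Real.sqrt t = t := Real.mul_self_sqrt ht.le
  have hs : (0:ℝ) < Real.sqrt t := Real.sqrt_pos.2 ht
  have hlin : HasDerivAt (fun s : ℝ => s * Real.sqrt t / 2) (Real.sqrt t / 2) σ := by
    simpa using ((hasDerivAt_id σ).mul_const (Real.sqrt t)).div_const 2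
  have hdp : HasDerivAt (fun s => dpv ζ t x s) (-(yv ζ t x σ) / σ + Real.sqrt t / 2) σ :=
    (hyv_s hσ).add hlin
  have hdm : HasDerivAt (fun s => dmv ζ t x s) (-(yv ζ t x σ) / σ - Real.sqrt t / 2) σ :=
    (hyv_s hσ).sub hlin
  have h := (((hasDerivAt_stdNormalCDF _).comp σ hdp).const_mul (Real.exp x)).sub
    (((hasDerivAt_stdNormalCDF _).comp σ hdm).const_mul (Real.exp ζ))
  have hev : (fun s => uBS ζ t x s) =ᶠ[nhds σ] fun s =>
      Real.exp x * stdNormalCDF (dpv ζ t x s) - Real.exp ζ * stdNormalCDF (dmv ζ t x s) := by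
    filter_upwards [eventually_gt_nhds hσ] with s hs'
    exact uBS_eq ht hs'
  refine (h.congr_of_eventuallyEq hev).congr_deriv ?_
  have k := keyId (ζ := ζ) (t := t) (x := x) (σ := σ) ht hσ
  have e : Real.exp (ζ / 2) * Real.exp (Ev ζ t x σ) =
      Real.exp x * (gaussD (dpv ζ t x σ) * Real.sqrt (2 * Real.pi)) := by
    rw [expId ht hσ]
    unfold gaussD
    have : Real.sqrt (2 * Real.pi) ≠ 0 := by positivity
    field_simp
  unfold FF
  simp only [eval_X, Matrix.cons_val_one, Matrix.head_cons, Matrix.cons_val_zero]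
  have hb : bv t σ = 1 / (σ * Real.sqrt t) := rfl
  rw [hb]
  set w := Real.sqrt (2 * Real.pi) with hw0
  have hw : w ≠ 0 := by rw [hw0]; positivity
  field_simp
  linear_combination ((2*Real.sqrt t*yv ζ t x σ*w + Real.sqrt t^2*σ*w)) * k +
    (-(2*σ*t)) * e + (2*σ*w*Real.exp x*gaussD (dpv ζ t x σ)) * h2
lemma ccoef_zero' (n : ℕ) : ccoef n 0 = 1 := by cases n <;> rfl

lemma ccoef_out {n q : ℕ} (h : n / 2 < q) : ccoef n q = 0 := by
  match n, q with
  | n, 0 => omega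
  | 0, q + 1 => rfl
  | n + 1, q + 1 =>
    show (if q + 1 ≤ (n + 1) / 2 then
        ((n : ℝ) + 1 - 2 * (q + 1) + 1) * ccoef n q + ccoef n (q + 1) else 0) = 0
    rw [if_neg (by omega)]

lemma ccoef_rec {n q : ℕ} (h : q + 1 ≤ (n + 1) / 2) :
    ccoef (n + 1) (q + 1) = ((n : ℝ) + 1 - 2 * (q + 1) + 1) * ccoef n q + ccoef n (q + 1) := by
  show (if q + 1 ≤ (n + 1) / 2 then
      ((n : ℝ) + 1 - 2 * (q + 1) + 1) * ccoef n q + ccoef n (q + 1) else 0) = _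
  rw [if_pos h]

lemma comb (n : ℕ) (hn : 1 ≤ n) (σ : ℝ) (W : ℕ → ℝ) :
    ∑ q ∈ Finset.range (n / 2 + 1),
        (ccoef n q * (↑(n - 2 * q) * σ ^ (n - 2 * q - 1)) * W (n - q) +
          ccoef n q * σ ^ (n - 2 * q) * (σ * W (n - q + 1))) =
      ∑ q ∈ Finset.range ((n + 1) / 2 + 1),
        ccoef (n + 1) q * σ ^ (n + 1 - 2 * q) * W (n + 1 - q) := by
  have hL : ∑ q ∈ Finset.range (n / 2 + 1),
        (ccoef n q * (↑(n - 2 * q) * σ ^ (n - 2 * q - 1)) * W (n - q) +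
          ccoef n q * σ ^ (n - 2 * q) * (σ * W (n - q + 1))) =
      ∑ q ∈ Finset.range (n + 2),
        (ccoef n q * (↑(n - 2 * q) * σ ^ (n - 2 * q - 1)) * W (n - q) +
          ccoef n q * σ ^ (n - 2 * q) * (σ * W (n - q + 1))) := by
    refine Finset.sum_subset (Finset.range_subset_range.2 (by omega)) ?_
    intro q _ hq
    rw [ccoef_out (show n / 2 < q by simpa [Nat.lt_succ] using hq)]
    ring
  have hR : ∑ q ∈ Finset.range ((n + 1) / 2 + 1),
        ccoef (n + 1) q * σ ^ (n + 1 - 2 * q) * W (n + 1 - q) =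
      ∑ q ∈ Finset.range (n + 2),
        ccoef (n + 1) q * σ ^ (n + 1 - 2 * q) * W (n + 1 - q) := by
    refine Finset.sum_subset (Finset.range_subset_range.2 (by omega)) ?_
    intro q _ hq
    rw [ccoef_out (show (n + 1) / 2 < q by simpa [Nat.lt_succ] using hq)]
    ring
  rw [hL, hR]
  rw [Finset.sum_add_distrib]
  rw [Finset.sum_range_succ (fun q => ccoef n q * (↑(n - 2 * q) * σ ^ (n - 2 * q - 1)) * W (n - q)) (n + 1)]
  rw [ccoef_out (show n / 2 < n + 1 by omega)]
  rw [Finset.sum_range_succ' (fun q => ccoef n q * σ ^ (n - 2 * q) * (σ * W (n - q + 1))) (n + 1)]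
  rw [Finset.sum_range_succ' (fun q => ccoef (n + 1) q * σ ^ (n + 1 - 2 * q) * W (n + 1 - q)) (n + 1)]
  have hzero : ccoef (n + 1) 0 * σ ^ (n + 1 - 2 * 0) * W (n + 1 - 0) =
      ccoef n 0 * σ ^ (n - 2 * 0) * (σ * W (n - 0 + 1)) := by
    rw [ccoef_zero', ccoef_zero']
    simp [pow_succ]
    ring
  rw [hzero]
  have hterm : ∀ i ∈ Finset.range (n + 1),
      ccoef (n + 1) (i + 1) * σ ^ (n + 1 - 2 * (i + 1)) * W (n + 1 - (i + 1)) =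
        ccoef n i * (↑(n - 2 * i) * σ ^ (n - 2 * i - 1)) * W (n - i) +
          ccoef n (i + 1) * σ ^ (n - 2 * (i + 1)) * (σ * W (n - (i + 1) + 1)) := by
    intro i _
    by_cases hc : i + 1 ≤ (n + 1) / 2
    · have h2i : 2 * i ≤ n := by omega
      have hcast : (↑(n - 2 * i) : ℝ) = (n : ℝ) - 2 * i := by
        rw [Nat.cast_sub h2i]; push_cast; ring
      rw [ccoef_rec hc]
      simp only [show n + 1 - 2 * (i + 1) = n - 2 * i - 1 from by omega,
        show n + 1 - (i + 1) = n - i from by omega]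
      by_cases hc2 : 2 * (i + 1) ≤ n
      · have hidx3 : n - (i + 1) + 1 = n - i := by omega
        have hpow : σ ^ (n - 2 * (i + 1)) * σ = σ ^ (n - 2 * i - 1) := by
          rw [← pow_succ]; congr 1; omega
        rw [hidx3, hcast]
        linear_combination (-(ccoef n (i + 1) * W (n - i))) * hpow
      · rw [ccoef_out (show n / 2 < i + 1 by omega)]
        rw [hcast]
        ring
    · rw [ccoef_out (show (n + 1) / 2 < i + 1 by omega),
        ccoef_out (show n / 2 < i + 1 by omega)]
      by_cases he : n = 2 * i
      · simp [he]
      · rw [ccoef_out (show n / 2 < i by omega)]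
        simp
  rw [Finset.sum_congr rfl hterm]
  rw [Finset.sum_add_distrib]
  ring
lemma hVderiv {ζ t x : ℝ} (ht : 0 < t) (j : ℕ) {σ : ℝ} (hσ : 0 < σ) :
    HasDerivAt (fun s => (Lop t)^[j + 1] (fun x' => uBS ζ t x' s) x)
      (σ * (Lop t)^[j + 2] (fun x' => uBS ζ t x' σ) x) σ := by
  have hev : (fun s => (Lop t)^[j + 1] (fun x' => uBS ζ t x' s) x) =ᶠ[nhds σ]
      (fun s => FF ζ t s (X 1 * Pk t j) x) := by
    filter_upwards [eventually_gt_nhds hσ] with s hs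
    rw [hLk ht hs j]
  have hd := (hMain (ζ := ζ) (x := x) ht hσ (Pk t j) (Rop_Pk t j)).congr_of_eventuallyEq hev
  refine hd.congr_deriv ?_
  rw [show (j + 2) = (j + 1) + 1 from rfl, hLk ht hσ (j + 1)]
  rw [show Pk t (j + 1) = Tmap t (Pk t j) from Function.iterate_succ_apply' _ _ _]

lemma main_aux (ζ t x : ℝ) (ht : 0 < t) (n : ℕ) (hn : 1 ≤ n) :
    ∀ σ : ℝ, 0 < σ → iteratedDeriv n (fun s => uBS ζ t x s) σ =
      ∑ q ∈ Finset.range (n / 2 + 1),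
        ccoef n q * σ ^ (n - 2 * q) * (Lop t)^[n - q] (fun x' => uBS ζ t x' σ) x := by
  induction n, hn using Nat.le_induction with
  | base =>
    intro σ hσ
    rw [iteratedDeriv_one, (hM0 ht hσ).deriv, Finset.sum_range_one, ccoef_zero']
    rw [show (1 : ℕ) - 0 = 0 + 1 from rfl, hLk ht hσ 0]
    simp [Pk]
  | succ n hn ih =>
    intro σ hσ
    rw [iteratedDeriv_succ]
    have hev : iteratedDeriv n (fun s => uBS ζ t x s) =ᶠ[nhds σ] fun s =>
        ∑ q ∈ Finset.range (n / 2 + 1),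
          ccoef n q * s ^ (n - 2 * q) * (Lop t)^[n - q] (fun x' => uBS ζ t x' s) x := by
      filter_upwards [eventually_gt_nhds hσ] with s hs
      exact ih s hs
    rw [hev.deriv_eq]
    have hgd : HasDerivAt (fun s =>
        ∑ q ∈ Finset.range (n / 2 + 1),
          ccoef n q * s ^ (n - 2 * q) * (Lop t)^[n - q] (fun x' => uBS ζ t x' s) x)
        (∑ q ∈ Finset.range (n / 2 + 1),
          (ccoef n q * (↑(n - 2 * q) * σ ^ (n - 2 * q - 1)) *
              (Lop t)^[n - q] (fun x' => uBS ζ t x' σ) x +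
            ccoef n q * σ ^ (n - 2 * q) *
              (σ * (Lop t)^[n - q + 1] (fun x' => uBS ζ t x' σ) x))) σ := by
      refine HasDerivAt.fun_sum ?_
      intro q hq
      have hq' : q ≤ n / 2 := by
        have := Finset.mem_range.1 hq; omega
      have hqn : q < n := by omega
      have hV := hVderiv (ζ := ζ) (x := x) ht (n - q - 1) hσ
      rw [show n - q - 1 + 1 = n - q from by omega, show n - q - 1 + 2 = n - q + 1 from by omega] at hV
      exact ((hasDerivAt_pow (n - 2 * q) σ).const_mul (ccoef n q)).mul hV
    rw [hgd.deriv]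
    exact comb n hn σ (fun j => (Lop t)^[j] (fun x' => uBS ζ t x' σ) x)

end BSAux

theorem sigma_derivatives_via_L (ζ t x σ : ℝ) (ht : 0 < t) (hσ : 0 < σ)
    (n : ℕ) (hn : 1 ≤ n) :
    iteratedDeriv n (fun s => uBS ζ t x s) σ =
      ∑ q ∈ Finset.range (n / 2 + 1),
        ccoef n q * σ ^ (n - 2 * q) * (Lop t)^[n - q] (fun x' => uBS ζ t x' σ) x :=
  BSAux.main_aux ζ t x ht n hn σ hσ
end

section
/- Fix t > 0, σ₀ > 0, x, ζ ∈ ℝ and real coefficients a₂, a₃. With u^BS the Black-Scholes price, y₀ = (x - ζ - σ₀²t/2)/(σ₀√(2t)), and u₁^(3) := (a₂(∂²_x - ∂_x) + a₃(∂³_x - ∂_x)) u^BS, we have u₁^(3)/∂_σ u^BS = (1/(tσ₀)) [a₃ (-1/(σ₀√(2t))) H₁(y₀) + (a₂ + a₃)], where H₁(y) = 2y. -/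
open MeasureTheory

noncomputable def phi (y : ℝ) : ℝ := Real.exp (-y ^ 2 / 2) / Real.sqrt (2 * Real.pi)

lemma phi_integrable : Integrable phi := by
  have h := (integrable_exp_neg_mul_sq (show (0:ℝ) < 1/2 by norm_num)).div_const
    (Real.sqrt (2 * Real.pi))
  have : phi = fun s => Real.exp (-(1/2) * s ^ 2) / Real.sqrt (2 * Real.pi) := by
    funext s; unfold phi; ring_nf
  rw [this]; exact h

lemma phi_continuous : Continuous phi := by
  unfold phi
  exact (Real.continuous_exp.comp (by continuity)).div_const _

lemma phi_pos (y : ℝ) : 0 < phi y := by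
  unfold phi
  exact div_pos (Real.exp_pos _) (Real.sqrt_pos.mpr (by positivity))

lemma hasDerivAt_stdNormalCDF (y : ℝ) : HasDerivAt stdNormalCDF (phi y) y := by
  have key : ∀ z : ℝ, stdNormalCDF z = stdNormalCDF 0 + ∫ s in (0:ℝ)..z, phi s := by
    intro z
    have := intervalIntegral.integral_Iic_sub_Iic (μ := volume) (f := phi)
      phi_integrable.integrableOn (a := 0) (b := z) phi_integrable.integrableOn
    unfold stdNormalCDF phi at *
    linarith
  have h : HasDerivAt (fun z => stdNormalCDF 0 + ∫ s in (0:ℝ)..z, phi s) (phi y) y :=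
    (intervalIntegral.integral_hasDerivAt_right
      phi_integrable.intervalIntegrable
      phi_continuous.stronglyMeasurable.stronglyMeasurableAtFilter
      phi_continuous.continuousAt).const_add _
  exact (funext key : stdNormalCDF = _) ▸ h

lemma hasDerivAt_phi (y : ℝ) : HasDerivAt phi (-y * phi y) y := by
  have h1 : HasDerivAt (fun s : ℝ => -s ^ 2 / 2) (-y) y := by
    have := ((hasDerivAt_pow 2 y).neg.div_const 2)
    refine this.congr_deriv ?_; simp; ring
  have h2 : HasDerivAt (fun s : ℝ => Real.exp (-s ^ 2 / 2)) (Real.exp (-y ^ 2 / 2) * (-y)) y :=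
    (Real.hasDerivAt_exp _).comp y h1
  have := h2.div_const (Real.sqrt (2 * Real.pi))
  unfold phi
  refine this.congr_deriv ?_; ring

lemma hermiteH_one (y : ℝ) : hermiteH 1 y = 2 * y := by
  have h : HasDerivAt (fun s : ℝ => Real.exp (-s ^ 2)) (Real.exp (-y ^ 2) * (-(2 * y))) y := by
    have h1 : HasDerivAt (fun s : ℝ => -s ^ 2) (-(2 * y)) y := by
      have := (hasDerivAt_pow 2 y).neg
      refine this.congr_deriv ?_; simp
    exact (Real.hasDerivAt_exp _).comp y h1
  unfold hermiteH
  rw [iteratedDeriv_one, h.deriv]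
  have hprod : Real.exp (y ^ 2) * Real.exp (-y ^ 2) = 1 := by
    rw [← Real.exp_add]; simp
  linear_combination (2 * y) * hprod


theorem u1_third_order_ratio (ζ t x σ₀ a₂ a₃ : ℝ) (ht : 0 < t) (hσ₀ : 0 < σ₀) :
    (a₂ * (iteratedDeriv 2 (fun x' => uBS ζ t x' σ₀) x - deriv (fun x' => uBS ζ t x' σ₀) x) +
      a₃ * (iteratedDeriv 3 (fun x' => uBS ζ t x' σ₀) x - deriv (fun x' => uBS ζ t x' σ₀) x)) /
        deriv (fun s => uBS ζ t x s) σ₀ =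
      (1 / (t * σ₀)) *
        (a₃ * (-(1 / (σ₀ * Real.sqrt (2 * t)))) *
            hermiteH 1 ((x - ζ - σ₀ ^ 2 * t / 2) / (σ₀ * Real.sqrt (2 * t))) + (a₂ + a₃)) := by
  set s : ℝ := Real.sqrt t with hs_def
  have hs : 0 < s := Real.sqrt_pos.mpr ht
  have hs2 : s ^ 2 = t := Real.sq_sqrt ht.le
  set c : ℝ := 1 / (σ₀ * s) with hc_def
  have hσs : σ₀ * s ≠ 0 := by positivity
  -- d± as functions of x'
  set Dp : ℝ → ℝ := fun x' => (x' - ζ + σ₀ ^ 2 * t / 2) / (σ₀ * s) with hDp_def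
  set Dm : ℝ → ℝ := fun x' => (x' - ζ - σ₀ ^ 2 * t / 2) / (σ₀ * s) with hDm_def
  have hDp : ∀ x', HasDerivAt Dp c x' := by
    intro x'
    exact (((hasDerivAt_id x').sub_const ζ).add_const _).div_const _
  have hDm : ∀ x', HasDerivAt Dm c x' := by
    intro x'
    exact (((hasDerivAt_id x').sub_const ζ).sub_const _).div_const _
  -- the key identity e^x φ(D₊) = e^ζ φ(D₋)
  have hEq : ∀ x', Real.exp x' * phi (Dp x') = Real.exp ζ * phi (Dm x') := by
    intro x'
    have h2 : Dp x' ^ 2 = Dm x' ^ 2 + 2 * (x' - ζ) := by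
      simp only [hDp_def, hDm_def]
      have hsq : (σ₀ * s) ^ 2 = σ₀ ^ 2 * t := by rw [mul_pow, hs2]
      field_simp
      linear_combination (2 * (x' - ζ) * 2) * hsq - 12 * σ₀ ^ 2 * (x' - ζ) * hs2
    have key : Real.exp x' * Real.exp (-Dp x' ^ 2 / 2)
        = Real.exp ζ * Real.exp (-Dm x' ^ 2 / 2) := by
      rw [← Real.exp_add, ← Real.exp_add]
      congr 1
      rw [h2]; ring
    unfold phi
    rw [← mul_div_assoc, ← mul_div_assoc, key]
  -- first derivative in x
  have hfun : (fun x'' => uBS ζ t x'' σ₀)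
      = fun x'' => Real.exp x'' * stdNormalCDF (Dp x'') - Real.exp ζ * stdNormalCDF (Dm x'') := rfl
  have hD1 : ∀ x', HasDerivAt (fun x'' => uBS ζ t x'' σ₀)
      (Real.exp x' * stdNormalCDF (Dp x')) x' := by
    intro x'
    rw [hfun]
    have h1 : HasDerivAt (fun x'' => Real.exp x'' * stdNormalCDF (Dp x''))
        (Real.exp x' * stdNormalCDF (Dp x') + Real.exp x' * (phi (Dp x') * c)) x' :=
      (Real.hasDerivAt_exp x').mul ((hasDerivAt_stdNormalCDF (Dp x')).comp x' (hDp x'))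
    have h2 : HasDerivAt (fun x'' => Real.exp ζ * stdNormalCDF (Dm x''))
        (Real.exp ζ * (phi (Dm x') * c)) x' :=
      ((hasDerivAt_stdNormalCDF (Dm x')).comp x' (hDm x')).const_mul _
    have h3 := h1.sub h2
    refine h3.congr_deriv (Eq.symm ?_)
    linear_combination -c * hEq x'
  have hderiv1 : deriv (fun x' => uBS ζ t x' σ₀)
      = fun x' => Real.exp x' * stdNormalCDF (Dp x') := funext fun x' => (hD1 x').deriv
  -- second derivative in x
  have hD2 : ∀ x', HasDerivAt (fun x'' => Real.exp x'' * stdNormalCDF (Dp x''))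
      (Real.exp x' * stdNormalCDF (Dp x') + Real.exp x' * phi (Dp x') * c) x' := by
    intro x'
    have h1 := (Real.hasDerivAt_exp x').mul ((hasDerivAt_stdNormalCDF (Dp x')).comp x' (hDp x'))
    refine h1.congr_deriv ?_; simp only [Function.comp_apply]; ring
  have h2fun : iteratedDeriv 2 (fun x' => uBS ζ t x' σ₀)
      = fun x' => Real.exp x' * stdNormalCDF (Dp x') + Real.exp x' * phi (Dp x') * c := by
    funext x'
    rw [iteratedDeriv_succ, iteratedDeriv_one, hderiv1]
    exact (hD2 x').deriv
  -- third derivative in x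
  have hD3 : HasDerivAt
      (fun x' => Real.exp x' * stdNormalCDF (Dp x') + Real.exp x' * phi (Dp x') * c)
      (Real.exp x * stdNormalCDF (Dp x) + 2 * (Real.exp x * phi (Dp x)) * c
        - Real.exp x * phi (Dp x) * (Dp x) * c * c) x := by
    have h1 := hD2 x
    have h2 : HasDerivAt (fun x' => Real.exp x' * phi (Dp x') * c)
        ((Real.exp x * phi (Dp x) + Real.exp x * (-(Dp x) * phi (Dp x) * c)) * c) x :=
      ((Real.hasDerivAt_exp x).mul ((hasDerivAt_phi (Dp x)).comp x (hDp x))).mul_const c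
    refine (h1.add h2).congr_deriv ?_; ring
  have h3val : iteratedDeriv 3 (fun x' => uBS ζ t x' σ₀) x
      = Real.exp x * stdNormalCDF (Dp x) + 2 * (Real.exp x * phi (Dp x)) * c
        - Real.exp x * phi (Dp x) * (Dp x) * c * c := by
    rw [iteratedDeriv_succ, h2fun]
    exact hD3.deriv
  -- derivative in σ
  have hden : HasDerivAt (fun σ : ℝ => σ * s) s σ₀ := by
    simpa using (hasDerivAt_id σ₀).mul_const s
  have hnump : HasDerivAt (fun σ : ℝ => x - ζ + σ ^ 2 * t / 2) (σ₀ * t) σ₀ := by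
    have := (((hasDerivAt_pow 2 σ₀).mul_const t).div_const 2).const_add (x - ζ)
    refine this.congr_deriv ?_; push_cast; ring
  have hnumm : HasDerivAt (fun σ : ℝ => x - ζ - σ ^ 2 * t / 2) (-(σ₀ * t)) σ₀ := by
    have := (((hasDerivAt_pow 2 σ₀).mul_const t).div_const 2).const_sub (x - ζ)
    refine this.congr_deriv ?_; push_cast; ring
  have hPs : HasDerivAt (fun σ => (x - ζ + σ ^ 2 * t / 2) / (σ * s))
      ((σ₀ * t * (σ₀ * s) - (x - ζ + σ₀ ^ 2 * t / 2) * s) / (σ₀ * s) ^ 2) σ₀ :=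
    hnump.div hden hσs
  have hMs : HasDerivAt (fun σ => (x - ζ - σ ^ 2 * t / 2) / (σ * s))
      ((-(σ₀ * t) * (σ₀ * s) - (x - ζ - σ₀ ^ 2 * t / 2) * s) / (σ₀ * s) ^ 2) σ₀ :=
    hnumm.div hden hσs
  have hσfun : (fun σ => uBS ζ t x σ)
      = fun σ => Real.exp x * stdNormalCDF ((x - ζ + σ ^ 2 * t / 2) / (σ * s))
        - Real.exp ζ * stdNormalCDF ((x - ζ - σ ^ 2 * t / 2) / (σ * s)) := rfl
  have hDσ : HasDerivAt (fun σ => uBS ζ t x σ) (Real.exp x * phi (Dp x) * s) σ₀ := by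
    rw [hσfun]
    have h1 := (((hasDerivAt_stdNormalCDF _).comp σ₀ hPs).const_mul (Real.exp x)).sub
      (((hasDerivAt_stdNormalCDF _).comp σ₀ hMs).const_mul (Real.exp ζ))
    refine h1.congr_deriv (Eq.symm ?_)
    have e1 : (x - ζ + σ₀ ^ 2 * t / 2) / (σ₀ * s) = Dp x := rfl
    have e2 : (x - ζ - σ₀ ^ 2 * t / 2) / (σ₀ * s) = Dm x := rfl
    rw [e1, e2]
    have hq := hEq x
    have hsq : (σ₀ * s) ^ 2 = σ₀ ^ 2 * t := by rw [mul_pow, hs2]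
    have h5 : (σ₀ * t * (σ₀ * s) - (x - ζ + σ₀ ^ 2 * t / 2) * s) / (σ₀ * s) ^ 2
        - (-(σ₀ * t) * (σ₀ * s) - (x - ζ - σ₀ ^ 2 * t / 2) * s) / (σ₀ * s) ^ 2 = s := by
      rw [div_sub_div_same, hsq]
      field_simp
      ring
    have h4 : Real.exp ζ * (phi (Dm x)
          * ((-(σ₀ * t) * (σ₀ * s) - (x - ζ - σ₀ ^ 2 * t / 2) * s) / (σ₀ * s) ^ 2))
        = Real.exp x * phi (Dp x)
          * ((-(σ₀ * t) * (σ₀ * s) - (x - ζ - σ₀ ^ 2 * t / 2) * s) / (σ₀ * s) ^ 2) := by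
      rw [← mul_assoc, ← hq]
    linear_combination h4 - (Real.exp x * phi (Dp x)) * h5
  -- assemble
  rw [hermiteH_one, hDσ.deriv, (hD1 x).deriv, h3val, congrFun h2fun x]
  set s2 : ℝ := Real.sqrt (2 * t) with hs2def
  have hs2' : s2 ^ 2 = 2 * t := Real.sq_sqrt (by positivity)
  have hs2pos : 0 < s2 := Real.sqrt_pos.mpr (by positivity)
  have hRHS : (1 / (t * σ₀)) * (a₃ * (-(1 / (σ₀ * s2)))
        * (2 * ((x - ζ - σ₀ ^ 2 * t / 2) / (σ₀ * s2))) + (a₂ + a₃))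
      = (1 / (t * σ₀)) * (a₃ * (-(x - ζ - σ₀ ^ 2 * t / 2) / (σ₀ ^ 2 * t)) + (a₂ + a₃)) := by
    have h2 : (σ₀ * s2) ^ 2 = σ₀ ^ 2 * (2 * t) := by rw [mul_pow, hs2']
    field_simp
    linear_combination (a₃ * (2 * (x - ζ) - t * σ₀ ^ 2)) * hs2'
  rw [hRHS]
  have hne : Real.exp x * phi (Dp x) * s ≠ 0 :=
    ne_of_gt (by have := phi_pos (Dp x); have := Real.exp_pos x; positivity)
  rw [div_eq_iff hne, hc_def]
  have hDx : Dp x = (x - ζ + σ₀ ^ 2 * t / 2) / (σ₀ * s) := rfl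
  rw [hDx, ← hs2]
  field_simp
  ring
end
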